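/- arXiv:2010.05373 — 5 statements merged into one kernel-verified Lean document; each statement's English description precedes it below -/
import Mathlib

section
/- Let $K \ge 1$, let $v_1, \dots, v_K \in \mathbb{R}$, $c \in \mathbb{R}$, and let $d$ be a positive integer. The maximum of $(c + \sum_{i=1}^K v_i \alpha_i)/(d + \sum_{i=1}^K \alpha_i)$ over $\alpha \in [0,1]^K$ is attained at the binary point $\alpha^\star$ defined by $\alpha_i^\star = 1$ if $v_i > (c + \sum_{j : v_j > v_i} v_j)/(d + |\{j : v_j > v_i\}|)$ and $\alpha_i^\star = 0$ otherwise. -/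
open Finset
open scoped Classical

/-- The binary candidate solution: `α⋆ᵢ = 1` iff
`vᵢ > (c + ∑_{j : vⱼ > vᵢ} vⱼ)/(d + #{j : vⱼ > vᵢ})`. -/
noncomputable def alphaStar (K : ℕ) (v : Fin K → ℝ) (c : ℝ) (d : ℕ) (i : Fin K) : ℝ :=
  if (c + ∑ j ∈ Finset.univ.filter (fun j => v i < v j), v j) /
      ((d : ℝ) + (Finset.univ.filter (fun j => v i < v j)).card) < v i
  then 1 else 0

/-- The linear fractional program `max { (c + ∑ vᵢ αᵢ)/(d + ∑ αᵢ) : α ∈ [0,1]^K }`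
is maximized by the binary point `α⋆`. -/
theorem stmt5 (K : ℕ) (hK : 1 ≤ K) (v : Fin K → ℝ) (c : ℝ) (d : ℕ) (hd : 0 < d) :
    ∀ α : Fin K → ℝ, (∀ i, 0 ≤ α i ∧ α i ≤ 1) →
      (c + ∑ i, v i * α i) / ((d : ℝ) + ∑ i, α i) ≤
        (c + ∑ i, v i * alphaStar K v c d i) / ((d : ℝ) + ∑ i, alphaStar K v c d i) := by
  intro α hα
  have hd0 : (0:ℝ) < (d:ℝ) := by exact_mod_cast hd
  set T : Finset (Fin K) → ℝ := fun S => (c + ∑ i ∈ S, v i) / ((d:ℝ) + S.card) with hT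
  have hdpos : ∀ S : Finset (Fin K), (0:ℝ) < (d:ℝ) + S.card := by
    intro S
    have : (0:ℝ) ≤ (S.card : ℝ) := Nat.cast_nonneg _
    linarith
  obtain ⟨S₀, -, hS₀⟩ := Finset.exists_max_image (Finset.univ : Finset (Finset (Fin K))) T
    ⟨∅, Finset.mem_univ _⟩
  set lam := T S₀ with hlam
  have hmax : ∀ S : Finset (Fin K), T S ≤ lam := fun S => hS₀ S (Finset.mem_univ S)
  -- rewrite c + ∑_S v - lam*(d+|S|) as g S
  have hg : ∀ S : Finset (Fin K),
      c + ∑ i ∈ S, v i - lam * ((d:ℝ) + S.card)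
        = c - lam * d + ∑ i ∈ S, (v i - lam) := by
    intro S
    rw [Finset.sum_sub_distrib, Finset.sum_const, nsmul_eq_mul]
    ring
  set Sl : Finset (Fin K) := Finset.univ.filter (fun i => lam < v i) with hSl
  -- key sum bound
  have key : ∀ S : Finset (Fin K),
      (∑ i ∈ S, (v i - lam)) ≤ ∑ i ∈ Sl, (v i - lam) := by
    intro S
    have h1 := (Finset.sum_filter_add_sum_filter_not S (fun i => lam < v i)
      (fun i => v i - lam)).symm
    have h2 : ∑ i ∈ S.filter (fun i => ¬ lam < v i), (v i - lam) ≤ 0 := by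
      refine Finset.sum_nonpos (fun i hi => ?_)
      rw [Finset.mem_filter] at hi
      push_neg at hi
      linarith [hi.2]
    have h3 : S.filter (fun i => lam < v i) ⊆ Sl := by
      intro i hi
      rw [Finset.mem_filter] at hi ⊢
      exact ⟨Finset.mem_univ _, hi.2⟩
    have h4 : ∑ i ∈ S.filter (fun i => lam < v i), (v i - lam)
        ≤ ∑ i ∈ Sl, (v i - lam) := by
      refine Finset.sum_le_sum_of_subset_of_nonneg h3 (fun i hi _ => ?_)
      rw [hSl, Finset.mem_filter] at hi
      linarith [hi.2]
    linarith
  -- the value at S₀ : c + ∑_{S₀} v = lam * (d + |S₀|)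
  have hS0eq : c + ∑ i ∈ S₀, v i = lam * ((d:ℝ) + S₀.card) := by
    rw [hlam, hT]
    field_simp
  -- T Sl = lam
  have hSleq : c + ∑ i ∈ Sl, v i = lam * ((d:ℝ) + Sl.card) := by
    have hle : c + ∑ i ∈ Sl, v i ≤ lam * ((d:ℝ) + Sl.card) := by
      have := hmax Sl
      rw [hT] at this
      calc c + ∑ i ∈ Sl, v i
          = ((c + ∑ i ∈ Sl, v i) / ((d:ℝ) + Sl.card)) * ((d:ℝ) + Sl.card) := by
            exact (div_mul_cancel₀ _ (ne_of_gt (hdpos Sl))).symm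
        _ ≤ lam * ((d:ℝ) + Sl.card) :=
            mul_le_mul_of_nonneg_right this (le_of_lt (hdpos Sl))
    have hge : lam * ((d:ℝ) + Sl.card) ≤ c + ∑ i ∈ Sl, v i := by
      have h0 : c + ∑ i ∈ S₀, v i - lam * ((d:ℝ) + S₀.card) = 0 := by
        rw [hS0eq]; ring
      have := key S₀
      have e1 := hg S₀
      have e2 := hg Sl
      linarith
    linarith
  -- lam is at least v i whenever alphaStar condition fails... establish Sstar = Sl
  set Sstar : Finset (Fin K) := Finset.univ.filter (fun i =>
    (c + ∑ j ∈ Finset.univ.filter (fun j => v i < v j), v j) /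
      ((d : ℝ) + (Finset.univ.filter (fun j => v i < v j)).card) < v i) with hSstar
  have hsetEq : Sstar = Sl := by
    ext i
    rw [hSstar, hSl, Finset.mem_filter, Finset.mem_filter]
    simp only [Finset.mem_univ, true_and]
    set A : Finset (Fin K) := Finset.univ.filter (fun j => v i < v j) with hA
    constructor
    · intro hi
      by_contra hcon
      push_neg at hcon  -- v i ≤ lam
      -- Sl ⊆ A
      have hsub : Sl ⊆ A := by
        intro j hj
        rw [hSl, Finset.mem_filter] at hj
        rw [hA, Finset.mem_filter]
        exact ⟨Finset.mem_univ _, lt_of_le_of_lt hcon hj.2⟩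
      have hsum : ∑ j ∈ A \ Sl, v j + ∑ j ∈ Sl, v j = ∑ j ∈ A, v j :=
        Finset.sum_sdiff hsub
      have hcard : ((A \ Sl).card : ℝ) + (Sl.card : ℝ) = (A.card : ℝ) := by
        have := Finset.card_sdiff_add_card_eq_card hsub
        exact_mod_cast this
      have hbound : ((A \ Sl).card : ℝ) * v i ≤ ∑ j ∈ A \ Sl, v j := by
        calc ((A \ Sl).card : ℝ) * v i = ∑ _j ∈ A \ Sl, v i := by
              rw [Finset.sum_const, nsmul_eq_mul]
          _ ≤ ∑ j ∈ A \ Sl, v j := by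
              refine Finset.sum_le_sum (fun j hj => ?_)
              have := (Finset.mem_sdiff.mp hj).1
              rw [hA, Finset.mem_filter] at this
              exact le_of_lt this.2
      -- numerator bound : c + ∑_A v ≥ v i * (d + |A|)
      have hnum : v i * ((d:ℝ) + A.card) ≤ c + ∑ j ∈ A, v j := by
        have h1 : v i * ((d:ℝ) + Sl.card) ≤ lam * ((d:ℝ) + Sl.card) :=
          mul_le_mul_of_nonneg_right hcon (le_of_lt (hdpos Sl))
        have hx : v i * ((d:ℝ) + (A.card:ℝ))
            = v i * ((d:ℝ) + (Sl.card:ℝ)) + ((A \ Sl).card : ℝ) * v i := by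
          rw [← hcard]; ring
        linarith [hSleq, hsum, hbound, h1, hx]
      -- hence φ i ≥ v i, contradiction
      have : v i ≤ (c + ∑ j ∈ A, v j) / ((d:ℝ) + A.card) :=
        (le_div_iff₀ (hdpos A)).mpr hnum
      rw [hA] at this
      linarith [hi]
    · intro hi
      have : T A ≤ lam := hmax A
      rw [hT] at this
      calc (c + ∑ j ∈ A, v j) / ((d:ℝ) + A.card) ≤ lam := this
        _ < v i := hi
  -- rewrite the RHS sums
  have hnum : ∑ i, v i * alphaStar K v c d i = ∑ i ∈ Sstar, v i := by
    rw [hSstar, Finset.sum_filter]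
    refine Finset.sum_congr rfl (fun i _ => ?_)
    rw [alphaStar]
    split <;> simp
  have hden : ∑ i, alphaStar K v c d i = (Sstar.card : ℝ) := by
    rw [hSstar, Finset.card_filter]
    push_cast
    refine Finset.sum_congr rfl (fun i _ => ?_)
    rw [alphaStar]
  rw [hnum, hden, hsetEq, hSleq]
  have hR : lam * ((d:ℝ) + Sl.card) / ((d:ℝ) + Sl.card) = lam :=
    mul_div_cancel_right₀ _ (ne_of_gt (hdpos Sl))
  rw [hR]
  have hden2 : (0:ℝ) < (d:ℝ) + ∑ i, α i := by
    have : (0:ℝ) ≤ ∑ i, α i := Finset.sum_nonneg (fun i _ => (hα i).1)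
    linarith
  rw [div_le_iff₀ hden2]
  -- c + ∑ v α ≤ lam * (d + ∑ α)
  have expand : ∑ i, (v i - lam) * α i = ∑ i, v i * α i - lam * ∑ i, α i := by
    rw [Finset.mul_sum, ← Finset.sum_sub_distrib]
    exact Finset.sum_congr rfl (fun i _ => by ring)
  have termwise : ∑ i, (v i - lam) * α i ≤ ∑ i ∈ Sl, (v i - lam) := by
    rw [hSl, Finset.sum_filter]
    refine Finset.sum_le_sum (fun i _ => ?_)
    by_cases h : lam < v i
    · rw [if_pos h]
      nlinarith [(hα i).1, (hα i).2]
    · rw [if_neg h]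
      push_neg at h
      nlinarith [(hα i).1]
  have e2 := hg Sl
  nlinarith [hSleq]
end

section
/- Let $\mathcal{X} \times \mathcal{Y}$ be a Polish metric space with metric $\mathbb{D}((x,y),(x',y')) = \mathbb{D}_\mathcal{X}(x,x') + \mathbb{D}_\mathcal{Y}(y,y')$, let $\widehat{\mathbb{P}} = N^{-1}\sum_{i=1}^N \delta_{(\widehat{x}_i, \widehat{y}_i)}$, and let $\mathcal{N}_\gamma(x_0) = \{x : \mathbb{D}_\mathcal{X}(x, x_0) \le \gamma\}$. Define $\kappa_{i,\gamma} = \min_{x \in \mathcal{N}_\gamma(x_0)} \mathbb{D}_\mathcal{X}(x, \widehat{x}_i)$ (assuming $\inf_{y} \mathbb{D}_\mathcal{Y}(y,\widehat{y}_i) = 0$). Then there exists a probability measure $\mathbb{Q}$ with $\mathbb{W}_\infty(\mathbb{Q}, \widehat{\mathbb{P}}) \le \rho$ and $\mathbb{Q}(\mathcal{N}_\gamma(x_0) \times \mathcal{Y}) > 0$ if and only if $\rho \ge \min_{i \in [N]} \kappa_{i,\gamma}$. -/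
open MeasureTheory Finset TopologicalSpace Metric
open scoped ENNReal

/-- The type-∞ Wasserstein distance associated to a general cost `D`:
infimum over couplings of the `π`-essential supremum of `D`. -/
noncomputable def WinfD {A : Type*} [MeasurableSpace A] (D : A → A → ℝ≥0∞)
    (Q P : Measure A) : ℝ≥0∞ :=
  ⨅ pi ∈ {pi : Measure (A × A) | pi.map Prod.fst = Q ∧ pi.map Prod.snd = P},
    essSup (fun p : A × A => D p.1 p.2) pi

private lemma map_finset_sum' {A B : Type*} [MeasurableSpace A] [MeasurableSpace B]
    {ι : Type*} (s : Finset ι) (μ : ι → MeasureTheory.Measure A) {f : A → B}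
    (hf : Measurable f) :
    (∑ i ∈ s, μ i).map f = ∑ i ∈ s, (μ i).map f := by
  classical
  induction s using Finset.cons_induction with
  | empty => simp
  | cons a s ha ih => rw [Finset.sum_cons, Measure.map_add _ _ hf, ih, Finset.sum_cons]

/-- Minimum-radius feasibility: on `X × Y` with the sum metric
`D((x,y),(x',y')) = d_X(x,x') + d_Y(y,y')`, and `κᵢ = min_{x ∈ N_γ(x₀)} d_X(x, x̂ᵢ)`,
there exists a probability measure `Q` with `W∞(Q, P̂) ≤ ρ` and
`Q(N_γ(x₀) × Y) > 0` iff `ρ ≥ minᵢ κᵢ`. -/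
theorem stmt10 {X Y : Type*}
    [MetricSpace X] [SeparableSpace X] [CompleteSpace X] [ProperSpace X]
    [MeasurableSpace X] [BorelSpace X]
    [MetricSpace Y] [SeparableSpace Y] [CompleteSpace Y]
    [MeasurableSpace Y] [BorelSpace Y]
    (N : ℕ) (hN : 0 < N) (xhat : Fin N → X) (yhat : Fin N → Y)
    (x0 : X) (gamma : ℝ) (hgamma : 0 ≤ gamma) (rho : ℝ) (hrho : 0 ≤ rho)
    (Phat : Measure (X × Y))
    (hPhat : Phat = ((N : ℝ≥0∞))⁻¹ •
        ∑ i : Fin N, Measure.dirac ((xhat i, yhat i) : X × Y))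
    (kappa : Fin N → ℝ)
    (hkappa : ∀ i, IsLeast ((fun x => dist x (xhat i)) '' closedBall x0 gamma) (kappa i)) :
    (∃ Q : Measure (X × Y), IsProbabilityMeasure Q ∧
        WinfD (fun p q => edist p.1 q.1 + edist p.2 q.2) Q Phat ≤ ENNReal.ofReal rho ∧
        0 < Q (closedBall x0 gamma ×ˢ Set.univ)) ↔
      (⨅ i, kappa i) ≤ rho := by
  classical
  haveI : Nonempty (Fin N) := ⟨⟨0, hN⟩⟩
  have hNne : (N : ℝ≥0∞) ≠ 0 := Nat.cast_ne_zero.mpr hN.ne'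
  have hNtop : (N : ℝ≥0∞) ≠ ⊤ := ENNReal.natCast_ne_top N
  have hbdd : BddBelow (Set.range kappa) := (Set.finite_range kappa).bddBelow
  constructor
  · rintro ⟨Q, hQprob, hW, hQpos⟩
    apply le_of_forall_pos_le_add
    intro ε hε
    have hlt : WinfD (fun p q => edist p.1 q.1 + edist p.2 q.2) Q Phat
        < ENNReal.ofReal (rho + ε) := by
      refine lt_of_le_of_lt hW ?_
      exact (ENNReal.ofReal_lt_ofReal_iff (by linarith)).2 (by linarith)
    rw [WinfD] at hlt
    simp only [iInf_lt_iff, Set.mem_setOf_eq] at hlt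
    obtain ⟨pi, ⟨hfst, hsnd⟩, hess⟩ := hlt
    set T : Set (X × Y) := Set.range (fun i : Fin N => ((xhat i, yhat i) : X × Y)) with hT
    have hTmeas : MeasurableSet T := (Set.finite_range _).measurableSet
    have hPhatT : Phat Tᶜ = 0 := by
      rw [hPhat]
      simp only [Measure.smul_apply, Measure.finset_sum_apply, smul_eq_mul]
      have hz : ∀ i : Fin N, Measure.dirac ((xhat i, yhat i) : X × Y) Tᶜ = 0 := by
        intro i
        rw [Measure.dirac_apply' _ hTmeas.compl]
        have : ((xhat i, yhat i) : X × Y) ∈ T := ⟨i, rfl⟩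
        simp [Set.indicator, this]
      simp [hz]
    have hpiT : pi {p : (X × Y) × (X × Y) | p.2 ∉ T} = 0 := by
      have h1 : pi (Prod.snd ⁻¹' Tᶜ) = Phat Tᶜ := by
        rw [← hsnd, Measure.map_apply measurable_snd hTmeas.compl]
      exact h1.trans hPhatT
    have hae : ∀ᵐ p : (X × Y) × (X × Y) ∂pi,
        (edist p.1.1 p.2.1 + edist p.1.2 p.2.2 ≤ ENNReal.ofReal (rho + ε)) ∧ p.2 ∈ T := by
      have h2 : ∀ᵐ p : (X × Y) × (X × Y) ∂pi, p.2 ∈ T := by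
        rw [ae_iff]; exact hpiT
      have h3 := ENNReal.ae_le_essSup
        (μ := pi) (f := fun p : (X × Y) × (X × Y) => edist p.1.1 p.2.1 + edist p.1.2 p.2.2)
      filter_upwards [h2, h3] with p hp2 hp3
      exact ⟨le_trans hp3 hess.le, hp2⟩
    have hB : 0 < pi (Prod.fst ⁻¹' (closedBall x0 gamma ×ˢ (Set.univ : Set Y))) := by
      have h4 := Measure.map_apply (μ := pi) (f := Prod.fst)
        (s := closedBall x0 gamma ×ˢ (Set.univ : Set Y)) measurable_fst
        (measurableSet_closedBall.prod MeasurableSet.univ)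
      rw [hfst] at h4
      rw [← h4]; exact hQpos
    have hne : ¬ (Prod.fst ⁻¹' (closedBall x0 gamma ×ˢ (Set.univ : Set Y)) ⊆
        {p : (X × Y) × (X × Y) |
          ¬ ((edist p.1.1 p.2.1 + edist p.1.2 p.2.2 ≤ ENNReal.ofReal (rho + ε)) ∧ p.2 ∈ T)}) := by
      intro hsub
      have h5 : pi (Prod.fst ⁻¹' (closedBall x0 gamma ×ˢ (Set.univ : Set Y))) = 0 :=
        measure_mono_null hsub (ae_iff.mp hae)
      exact hB.ne' h5
    obtain ⟨p, hpB, hpg⟩ := Set.not_subset.mp hne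
    have hpg' := not_not.mp hpg
    obtain ⟨i, hi⟩ := hpg'.2
    have hx : p.1.1 ∈ closedBall x0 gamma := hpB.1
    have hd : edist p.1.1 (xhat i) ≤ ENNReal.ofReal (rho + ε) := by
      calc edist p.1.1 (xhat i) = edist p.1.1 p.2.1 := by rw [← hi]
      _ ≤ edist p.1.1 p.2.1 + edist p.1.2 p.2.2 := le_self_add
      _ ≤ _ := hpg'.1
    have hdr : dist p.1.1 (xhat i) ≤ rho + ε := by
      rw [edist_dist] at hd
      exact (ENNReal.ofReal_le_ofReal_iff (by linarith)).1 hd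
    have hk : kappa i ≤ rho + ε := le_trans ((hkappa i).2 ⟨p.1.1, hx, rfl⟩) hdr
    exact le_trans (ciInf_le hbdd i) hk
  · intro hle
    obtain ⟨i0, hi0⟩ := Finite.exists_min kappa
    have hinf : (⨅ i, kappa i) = kappa i0 :=
      le_antisymm (ciInf_le hbdd i0) (le_ciInf hi0)
    have hki0 : kappa i0 ≤ rho := hinf ▸ hle
    obtain ⟨xstar, hxstar, hxd⟩ := (hkappa i0).1
    have hxd' : dist xstar (xhat i0) = kappa i0 := hxd
    set f : Fin N → X × Y := fun i => if i = i0 then (xstar, yhat i0) else (xhat i, yhat i)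
      with hfdef
    refine ⟨((N : ℝ≥0∞))⁻¹ • ∑ i : Fin N, Measure.dirac (f i), ?_, ?_, ?_⟩
    · constructor
      simp only [Measure.smul_apply, Measure.finset_sum_apply, measure_univ, smul_eq_mul]
      rw [Finset.sum_const, Finset.card_univ, Fintype.card_fin, nsmul_eq_mul, mul_one,
        ENNReal.inv_mul_cancel hNne hNtop]
    · set π : Measure ((X × Y) × (X × Y)) :=
        ((N : ℝ≥0∞))⁻¹ • ∑ i : Fin N, Measure.dirac ((f i, ((xhat i, yhat i) : X × Y))) with hπ
      have hmap1 : π.map Prod.fst = ((N : ℝ≥0∞))⁻¹ • ∑ i : Fin N, Measure.dirac (f i) := by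
        rw [hπ, Measure.map_smul, map_finset_sum' _ _ measurable_fst]
        congr 1
        refine Finset.sum_congr rfl fun i _ => ?_
        rw [Measure.map_dirac' measurable_fst]
      have hmap2 : π.map Prod.snd = Phat := by
        rw [hπ, Measure.map_smul, map_finset_sum' _ _ measurable_snd, hPhat]
        congr 1
        refine Finset.sum_congr rfl fun i _ => ?_
        rw [Measure.map_dirac' measurable_snd]
      rw [WinfD]
      refine le_trans (iInf₂_le π ⟨hmap1, hmap2⟩) ?_
      have hset : MeasurableSet {p : (X × Y) × (X × Y) |
          ¬ edist p.1.1 p.2.1 + edist p.1.2 p.2.2 ≤ ENNReal.ofReal rho} := by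
        have hc : Continuous fun p : (X × Y) × (X × Y) =>
            edist p.1.1 p.2.1 + edist p.1.2 p.2.2 := by
          fun_prop
        exact (measurableSet_le hc.measurable measurable_const).compl
      have hgoal : ∀ᵐ p : (X × Y) × (X × Y) ∂π,
          edist p.1.1 p.2.1 + edist p.1.2 p.2.2 ≤ ENNReal.ofReal rho := by
        rw [ae_iff, hπ]
        simp only [Measure.smul_apply, Measure.finset_sum_apply, smul_eq_mul]
        have hz : ∀ i : Fin N,
            Measure.dirac ((f i, ((xhat i, yhat i) : X × Y)))
              {p : (X × Y) × (X × Y) |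
                ¬ edist p.1.1 p.2.1 + edist p.1.2 p.2.2 ≤ ENNReal.ofReal rho} = 0 := by
          intro i
          rw [Measure.dirac_apply' _ hset]
          have hmem : edist (f i).1 (xhat i) + edist (f i).2 (yhat i) ≤ ENNReal.ofReal rho := by
            by_cases h : i = i0
            · subst h
              simp only [hfdef, if_pos rfl]
              rw [edist_self, add_zero, edist_dist, hxd']
              exact ENNReal.ofReal_le_ofReal hki0
            · simp only [hfdef, if_neg h]
              simp
          simp only [Set.indicator_apply]
          rw [if_neg]
          simpa using hmem
        simp only [hz, Finset.sum_const_zero, mul_zero]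
      exact essSup_le_of_ae_le _ hgoal
    · have hmem : f i0 ∈ closedBall x0 gamma ×ˢ (Set.univ : Set Y) := by
        simp only [hfdef, if_pos rfl]
        exact ⟨hxstar, Set.mem_univ _⟩
      have hsmeas : MeasurableSet (closedBall x0 gamma ×ˢ (Set.univ : Set Y)) :=
        measurableSet_closedBall.prod MeasurableSet.univ
      have h1 : (1 : ℝ≥0∞) ≤ ∑ i : Fin N, Measure.dirac (f i)
          (closedBall x0 gamma ×ˢ (Set.univ : Set Y)) := by
        have : Measure.dirac (f i0) (closedBall x0 gamma ×ˢ (Set.univ : Set Y)) = 1 := by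
          rw [Measure.dirac_apply' _ hsmeas]
          simp [Set.indicator_apply, hmem]
        calc (1 : ℝ≥0∞) = Measure.dirac (f i0) (closedBall x0 gamma ×ˢ (Set.univ : Set Y)) :=
              this.symm
        _ ≤ _ := Finset.single_le_sum (f := fun i => Measure.dirac (f i)
              (closedBall x0 gamma ×ˢ (Set.univ : Set Y)))
              (fun i _ => zero_le) (Finset.mem_univ i0)
      have h2 : (0 : ℝ≥0∞) < (N : ℝ≥0∞)⁻¹ := ENNReal.inv_pos.mpr hNtop
      calc (0 : ℝ≥0∞) < (N : ℝ≥0∞)⁻¹ * 1 := by simpa using h2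
      _ ≤ (N : ℝ≥0∞)⁻¹ * ∑ i : Fin N, Measure.dirac (f i)
            (closedBall x0 gamma ×ˢ (Set.univ : Set Y)) :=
          mul_le_mul_right h1 _
      _ = _ := by simp [Measure.smul_apply, Measure.finset_sum_apply]
end

section
/- Fix $x_0$, $\gamma \ge 0$, and let $\mathbb{B}$ be a convex set of probability measures on $\mathcal{X} \times \mathcal{Y}$. Define the conditional set $\mathcal{B} = \{\mu_0 \in \mathcal{M}(\mathcal{Y}) : \exists \mathbb{Q} \in \mathbb{B},\ \mathbb{Q}(\mathcal{N}_\gamma(x_0) \times \mathcal{Y}) > 0,\ \mathbb{Q}(\mathcal{N}_\gamma(x_0) \times A) = \mu_0(A)\,\mathbb{Q}(\mathcal{N}_\gamma(x_0) \times \mathcal{Y})\ \forall A \text{ measurable}\}$. Then $\mathcal{B}$ is convex. -/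
open MeasureTheory
open scoped ENNReal

/-- Convexity of the conditional ambiguity set: if `B` is a convex set of probability
measures on `X × Y` and `𝒞` is the set of conditional distributions of `Y` given
`X ∈ N` induced by members of `B` charging `N × Y` positively, then `𝒞` is convex. -/
theorem stmt12 {X Y : Type*} [MeasurableSpace X] [MeasurableSpace Y]
    (B : Set (Measure (X × Y))) (hprob : ∀ Q ∈ B, IsProbabilityMeasure Q)
    (hconv : ∀ Q0 ∈ B, ∀ Q1 ∈ B, ∀ t : ℝ, 0 ≤ t → t ≤ 1 →
      ENNReal.ofReal t • Q1 + ENNReal.ofReal (1 - t) • Q0 ∈ B)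
    (Nset : Set X) (hNset : MeasurableSet Nset)
    (mu0 mu1 : Measure Y) [IsProbabilityMeasure mu0] [IsProbabilityMeasure mu1]
    (h0 : ∃ Q ∈ B, 0 < Q (Nset ×ˢ Set.univ) ∧
      ∀ A : Set Y, MeasurableSet A → Q (Nset ×ˢ A) = mu0 A * Q (Nset ×ˢ Set.univ))
    (h1 : ∃ Q ∈ B, 0 < Q (Nset ×ˢ Set.univ) ∧
      ∀ A : Set Y, MeasurableSet A → Q (Nset ×ˢ A) = mu1 A * Q (Nset ×ˢ Set.univ))
    (lam : ℝ) (hlam0 : 0 ≤ lam) (hlam1 : lam ≤ 1) :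
    ∃ Q ∈ B, 0 < Q (Nset ×ˢ Set.univ) ∧
      ∀ A : Set Y, MeasurableSet A →
        Q (Nset ×ˢ A) =
          (ENNReal.ofReal lam • mu1 + ENNReal.ofReal (1 - lam) • mu0) A *
            Q (Nset ×ˢ Set.univ) := by
  obtain ⟨Q0, hQ0, hq0pos, hcond0⟩ := h0
  obtain ⟨Q1, hQ1, hq1pos, hcond1⟩ := h1
  haveI := hprob Q0 hQ0
  haveI := hprob Q1 hQ1
  set q0 := Q0 (Nset ×ˢ Set.univ) with hq0def
  set q1 := Q1 (Nset ×ˢ Set.univ) with hq1def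
  have hq0fin : q0 ≠ ⊤ := (measure_lt_top Q0 _).ne
  have hq1fin : q1 ≠ ⊤ := (measure_lt_top Q1 _).ne
  set a0 := q0.toReal with ha0def
  set a1 := q1.toReal with ha1def
  have ha0 : 0 < a0 := ENNReal.toReal_pos hq0pos.ne' hq0fin
  have ha1 : 0 < a1 := ENNReal.toReal_pos hq1pos.ne' hq1fin
  have hq0 : q0 = ENNReal.ofReal a0 := (ENNReal.ofReal_toReal hq0fin).symm
  have hq1 : q1 = ENNReal.ofReal a1 := (ENNReal.ofReal_toReal hq1fin).symm
  set D := lam * a0 + (1 - lam) * a1 with hD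
  have hDpos : 0 < D := by
    rcases eq_or_lt_of_le hlam0 with h | h
    · have : D = a1 := by rw [hD, ← h]; ring
      linarith
    · have h1' : 0 ≤ (1 - lam) * a1 := mul_nonneg (by linarith) ha1.le
      have : 0 < lam * a0 := mul_pos h ha0
      linarith
  set t := lam * a0 / D with htdef
  have ht0 : 0 ≤ t := div_nonneg (mul_nonneg hlam0 ha0.le) hDpos.le
  have ht1 : t ≤ 1 := by
    rw [htdef, div_le_one hDpos]
    nlinarith [mul_nonneg (sub_nonneg.2 hlam1) ha1.le]
  have ht1' : 0 ≤ 1 - t := by linarith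
  -- key real identities
  have hid1 : t * a1 = lam * (t * a1 + (1 - t) * a0) := by
    rw [htdef]; field_simp; ring
  have hid0 : (1 - t) * a0 = (1 - lam) * (t * a1 + (1 - t) * a0) := by
    rw [htdef]; field_simp; ring
  have hsumpos : 0 < t * a1 + (1 - t) * a0 := by
    rcases eq_or_lt_of_le ht0 with h | h
    · nlinarith
    · nlinarith [mul_pos h ha1, mul_nonneg ht1' ha0.le]
  refine ⟨ENNReal.ofReal t • Q1 + ENNReal.ofReal (1 - t) • Q0,
    hconv Q0 hQ0 Q1 hQ1 t ht0 ht1, ?_, ?_⟩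
  · simp only [Measure.add_apply, Measure.smul_apply, smul_eq_mul, ← hq0def, ← hq1def]
    rw [hq0, hq1, ← ENNReal.ofReal_mul ht0, ← ENNReal.ofReal_mul ht1',
      ← ENNReal.ofReal_add (mul_nonneg ht0 ha1.le) (mul_nonneg ht1' ha0.le)]
    exact ENNReal.ofReal_pos.mpr hsumpos
  · intro A hA
    simp only [Measure.add_apply, Measure.smul_apply, smul_eq_mul, ← hq0def, ← hq1def,
      hcond0 A hA, hcond1 A hA]
    set S := ENNReal.ofReal t * q1 + ENNReal.ofReal (1 - t) * q0 with hS
    have key1 : ENNReal.ofReal t * q1 = ENNReal.ofReal lam * S := by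
      rw [hS]
      rw [hq0, hq1, ← ENNReal.ofReal_mul ht0, ← ENNReal.ofReal_mul ht1',
        ← ENNReal.ofReal_add (mul_nonneg ht0 ha1.le) (mul_nonneg ht1' ha0.le),
        ← ENNReal.ofReal_mul hlam0]
      exact congrArg ENNReal.ofReal hid1
    have key0 : ENNReal.ofReal (1 - t) * q0 = ENNReal.ofReal (1 - lam) * S := by
      rw [hS]
      rw [hq0, hq1, ← ENNReal.ofReal_mul ht0, ← ENNReal.ofReal_mul ht1',
        ← ENNReal.ofReal_add (mul_nonneg ht0 ha1.le) (mul_nonneg ht1' ha0.le),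
        ← ENNReal.ofReal_mul (by linarith : (0:ℝ) ≤ 1 - lam)]
      exact congrArg ENNReal.ofReal hid0
    have lhs : ENNReal.ofReal t * (mu1 A * q1) + ENNReal.ofReal (1 - t) * (mu0 A * q0)
        = mu1 A * (ENNReal.ofReal t * q1) + mu0 A * (ENNReal.ofReal (1 - t) * q0) := by
      ring
    rw [lhs, key1, key0]
    ring
end

section
/- Let $a \le b$ be reals, $\rho > 0$, and suppose for each $i$ in a nonempty finite index set $\mathcal{I}$ we are given $\widehat{y}_i \in \mathbb{R}$ and costs $c_i \ge 0$ with $c_i \le \rho$. Consider $f(\beta) = \max_{i \in \mathcal{I}} \max\{(\widehat{y}_i - \rho + c_i - \beta)^2, (\widehat{y}_i + \rho - c_i - \beta)^2\}$ (the worst-case squared loss when every point can be perturbed). Then the minimizer of $f$ over $\beta \in \mathbb{R}$ is $\beta^\star = \tfrac{1}{2}\min_{i\in\mathcal{I}}(\widehat{y}_i - \rho + c_i) + \tfrac{1}{2}\max_{i\in\mathcal{I}}(\widehat{y}_i + \rho - c_i)$. -/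
open Finset

/-- The worst-case squared loss `f(β) = maxᵢ max{(ŷᵢ-ρ+cᵢ-β)², (ŷᵢ+ρ-cᵢ-β)²}` is
uniquely minimized at the midpoint
`β⋆ = (minᵢ (ŷᵢ-ρ+cᵢ))/2 + (maxᵢ (ŷᵢ+ρ-cᵢ))/2`. -/
theorem stmt17 {ι : Type*} (I : Finset ι) (hI : I.Nonempty) (a b : ℝ) (hab : a ≤ b)
    (rho : ℝ) (hrho : 0 < rho) (yhat c : ι → ℝ)
    (hc : ∀ i ∈ I, 0 ≤ c i ∧ c i ≤ rho) :
    ∀ beta : ℝ,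
      (I.sup' hI fun i =>
          max ((yhat i - rho + c i - ((I.inf' hI fun j => yhat j - rho + c j) / 2 +
              (I.sup' hI fun j => yhat j + rho - c j) / 2)) ^ 2)
            ((yhat i + rho - c i - ((I.inf' hI fun j => yhat j - rho + c j) / 2 +
              (I.sup' hI fun j => yhat j + rho - c j) / 2)) ^ 2)) ≤
        (I.sup' hI fun i =>
          max ((yhat i - rho + c i - beta) ^ 2) ((yhat i + rho - c i - beta) ^ 2)) ∧
      (beta ≠ (I.inf' hI fun j => yhat j - rho + c j) / 2 +
          (I.sup' hI fun j => yhat j + rho - c j) / 2 →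
        (I.sup' hI fun i =>
            max ((yhat i - rho + c i - ((I.inf' hI fun j => yhat j - rho + c j) / 2 +
                (I.sup' hI fun j => yhat j + rho - c j) / 2)) ^ 2)
              ((yhat i + rho - c i - ((I.inf' hI fun j => yhat j - rho + c j) / 2 +
                (I.sup' hI fun j => yhat j + rho - c j) / 2)) ^ 2)) <
          (I.sup' hI fun i =>
            max ((yhat i - rho + c i - beta) ^ 2) ((yhat i + rho - c i - beta) ^ 2))) := by
  intro beta
  set m := I.inf' hI fun j => yhat j - rho + c j with hm
  set M := I.sup' hI fun j => yhat j + rho - c j with hM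
  obtain ⟨k, hk⟩ := id hI
  have hmM : m ≤ M := by
    have h1 : m ≤ yhat k - rho + c k := Finset.inf'_le _ hk
    have h2 : yhat k + rho - c k ≤ M := Finset.le_sup' (fun j => yhat j + rho - c j) hk
    have h3 := (hc k hk).2
    linarith
  -- f(β⋆) ≤ ((M-m)/2)^2
  have hA : (I.sup' hI fun i =>
      max ((yhat i - rho + c i - (m / 2 + M / 2)) ^ 2)
        ((yhat i + rho - c i - (m / 2 + M / 2)) ^ 2)) ≤ ((M - m) / 2) ^ 2 := by
    apply Finset.sup'_le
    intro i hi
    have h1 : m ≤ yhat i - rho + c i := Finset.inf'_le _ hi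
    have h2 : yhat i + rho - c i ≤ M := Finset.le_sup' (fun j => yhat j + rho - c j) hi
    have h3 : c i ≤ rho := (hc i hi).2
    apply max_le <;> nlinarith
  obtain ⟨i0, hi0, hm0⟩ := Finset.exists_mem_eq_inf' hI fun j => yhat j - rho + c j
  obtain ⟨i1, hi1, hM1⟩ := Finset.exists_mem_eq_sup' hI fun j => yhat j + rho - c j
  have hm0' : m = yhat i0 - rho + c i0 := hm.trans hm0
  have hM1' : M = yhat i1 + rho - c i1 := hM.trans hM1
  have hB1 : (m - beta) ^ 2 ≤ (I.sup' hI fun i =>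
      max ((yhat i - rho + c i - beta) ^ 2) ((yhat i + rho - c i - beta) ^ 2)) := by
    refine le_trans ?_ (Finset.le_sup' (fun i =>
      max ((yhat i - rho + c i - beta) ^ 2) ((yhat i + rho - c i - beta) ^ 2)) hi0)
    rw [hm0']
    exact le_max_left _ _
  have hB2 : (M - beta) ^ 2 ≤ (I.sup' hI fun i =>
      max ((yhat i - rho + c i - beta) ^ 2) ((yhat i + rho - c i - beta) ^ 2)) := by
    refine le_trans ?_ (Finset.le_sup' (fun i =>
      max ((yhat i - rho + c i - beta) ^ 2) ((yhat i + rho - c i - beta) ^ 2)) hi1)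
    rw [hM1']
    exact le_max_right _ _
  constructor
  · refine hA.trans ?_
    rcases le_or_gt beta (m / 2 + M / 2) with h | h
    · refine le_trans ?_ hB2
      nlinarith
    · refine le_trans ?_ hB1
      nlinarith
  · intro hne
    refine lt_of_le_of_lt hA ?_
    have hsub : beta - (m / 2 + M / 2) ≠ 0 := sub_ne_zero.mpr hne
    have hsq : 0 < (beta - (m / 2 + M / 2)) ^ 2 := by positivity
    rcases le_or_gt beta (m / 2 + M / 2) with h | h
    · refine lt_of_lt_of_le ?_ hB2
      nlinarith
    · refine lt_of_lt_of_le ?_ hB1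
      nlinarith
end

section
/- Let $v_i^\star \in \mathbb{R}$ for $i$ in a finite set $\mathcal{I}$, partitioned as $\mathcal{I} = \mathcal{I}_1 \cup \mathcal{I}_2$ with $\mathcal{I}_1 \ne \emptyset$. Then the maximum of $(\sum_{i\in\mathcal{I}_1} v_i^\star + \sum_{i\in\mathcal{I}_2} v_i^\star \alpha_i)/(|\mathcal{I}_1| + \sum_{i\in\mathcal{I}_2} \alpha_i)$ over $\alpha \in [0,1]^{\mathcal{I}_2}$ equals the maximum over binary $\alpha \in \{0,1\}^{\mathcal{I}_2}$, and is at least $\max\{\overline{v}_1, \max_{i\in\mathcal{I}_2} (\sum_{j\in\mathcal{I}_1} v_j^\star + v_i^\star)/(|\mathcal{I}_1|+1)\}$, where $\overline{v}_1 = |\mathcal{I}_1|^{-1}\sum_{i\in\mathcal{I}_1} v_i^\star$. -/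
open Finset

lemma endpt (A B c t : ℝ) (hB : 0 < B) (h0 : 0 ≤ t) (h1 : t ≤ 1) :
    (A + c * t) / (B + t) ≤ max (A / B) ((A + c) / (B + 1)) := by
  set M := max (A / B) ((A + c) / (B + 1)) with hM
  have hB1 : (0:ℝ) < B + 1 := by linarith
  have hBt : (0:ℝ) < B + t := by linarith
  have hA : A ≤ M * B := by
    have := le_max_left (A / B) ((A + c) / (B + 1))
    rw [div_le_iff₀ hB] at this
    · linarith [this]
  have hAc : A + c ≤ M * (B + 1) := by
    have := le_max_right (A / B) ((A + c) / (B + 1))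
    rw [div_le_iff₀ hB1] at this
    linarith [this]
  rw [div_le_iff₀ hBt]
  nlinarith [mul_le_mul_of_nonneg_left hA (sub_nonneg.mpr h1)]

lemma key {ι : Type*} (v : ι → ℝ) (I2 : Finset ι) :
    ∀ (A B : ℝ), 0 < B → ∀ α' : ι → ℝ, (∀ i ∈ I2, 0 ≤ α' i ∧ α' i ≤ 1) →
      ∃ S ⊆ I2, (A + ∑ i ∈ I2, v i * α' i) / (B + ∑ i ∈ I2, α' i) ≤
        (A + ∑ i ∈ S, v i) / (B + S.card) := by
  classical
  induction I2 using Finset.induction_on with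
  | empty => intro A B hB α' _; exact ⟨∅, Subset.refl _, by simp⟩
  | @insert a s ha ih =>
    intro A B hB α' hα'
    have hbnd : ∀ i ∈ s, 0 ≤ α' i ∧ α' i ≤ 1 := fun i hi => hα' i (mem_insert_of_mem hi)
    have hta := hα' a (mem_insert_self a s)
    have hσ : 0 ≤ ∑ i ∈ s, α' i := Finset.sum_nonneg fun i hi => (hbnd i hi).1
    rw [Finset.sum_insert ha, Finset.sum_insert ha]
    have hBσ : 0 < B + ∑ i ∈ s, α' i := by linarith
    have hend := endpt (A + ∑ i ∈ s, v i * α' i) (B + ∑ i ∈ s, α' i) (v a) (α' a)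
      hBσ hta.1 hta.2
    have heq : (A + (v a * α' a + ∑ i ∈ s, v i * α' i)) / (B + (α' a + ∑ i ∈ s, α' i))
        = ((A + ∑ i ∈ s, v i * α' i) + v a * α' a) / ((B + ∑ i ∈ s, α' i) + α' a) := by
      ring_nf
    rw [heq]
    rcases le_total ((A + ∑ i ∈ s, v i * α' i + v a) / (B + ∑ i ∈ s, α' i + 1))
        ((A + ∑ i ∈ s, v i * α' i) / (B + ∑ i ∈ s, α' i)) with h | h
    · -- t = 0 case dominates
      obtain ⟨S, hS, hle⟩ := ih A B hB α' hbnd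
      refine ⟨S, hS.trans (subset_insert a s), ?_⟩
      calc ((A + ∑ i ∈ s, v i * α' i) + v a * α' a) / ((B + ∑ i ∈ s, α' i) + α' a)
          ≤ max _ _ := hend
        _ ≤ (A + ∑ i ∈ s, v i * α' i) / (B + ∑ i ∈ s, α' i) := by
            apply max_le le_rfl
            convert h using 2 <;> ring
        _ ≤ _ := hle
    · obtain ⟨S, hS, hle⟩ := ih (A + v a) (B + 1) (by linarith) α' hbnd
      have haS : a ∉ S := fun h => ha (hS h)
      refine ⟨insert a S, insert_subset_insert a hS, ?_⟩
      rw [Finset.sum_insert haS, Finset.card_insert_of_notMem haS]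
      push_cast
      calc ((A + ∑ i ∈ s, v i * α' i) + v a * α' a) / ((B + ∑ i ∈ s, α' i) + α' a)
          ≤ max _ _ := hend
        _ ≤ (A + ∑ i ∈ s, v i * α' i + v a) / (B + ∑ i ∈ s, α' i + 1) := by
            apply max_le h
            apply le_of_eq; ring_nf
        _ = (A + v a + ∑ i ∈ s, v i * α' i) / (B + 1 + ∑ i ∈ s, α' i) := by
            congr 1 <;> ring
        _ ≤ (A + v a + ∑ i ∈ S, v i) / (B + 1 + S.card) := hle
        _ = (A + (v a + ∑ i ∈ S, v i)) / ((B + (S.card + 1) : ℝ)) := by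
            congr 1 <;> push_cast <;> ring

/-- Structure of the worst-case conditional expected loss: the fractional linear
objective `(∑_{I₁} vᵢ + ∑_{I₂} vᵢ αᵢ)/(|I₁| + ∑_{I₂} αᵢ)` over `α ∈ [0,1]^{I₂}` attains
its maximum at a binary point, and the maximum is at least `v̄₁` and at least
`(∑_{I₁} vⱼ + vᵢ)/(|I₁|+1)` for each `i ∈ I₂`. -/
theorem stmt18 {ι : Type*} (I1 I2 : Finset ι) (hdisj : Disjoint I1 I2)
    (h1 : I1.Nonempty) (v : ι → ℝ) :
    ∃ alpha : ι → ℝ, (∀ i ∈ I2, alpha i = 0 ∨ alpha i = 1) ∧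
      (∀ alpha' : ι → ℝ, (∀ i ∈ I2, 0 ≤ alpha' i ∧ alpha' i ≤ 1) →
        (∑ i ∈ I1, v i + ∑ i ∈ I2, v i * alpha' i) /
            ((I1.card : ℝ) + ∑ i ∈ I2, alpha' i) ≤
          (∑ i ∈ I1, v i + ∑ i ∈ I2, v i * alpha i) /
            ((I1.card : ℝ) + ∑ i ∈ I2, alpha i)) ∧
      ((I1.card : ℝ)⁻¹ * ∑ i ∈ I1, v i ≤
          (∑ i ∈ I1, v i + ∑ i ∈ I2, v i * alpha i) /
            ((I1.card : ℝ) + ∑ i ∈ I2, alpha i)) ∧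
      (∀ i ∈ I2, (∑ j ∈ I1, v j + v i) / ((I1.card : ℝ) + 1) ≤
          (∑ j ∈ I1, v j + ∑ j ∈ I2, v j * alpha j) /
            ((I1.card : ℝ) + ∑ j ∈ I2, alpha j)) := by
  classical
  set A : ℝ := ∑ i ∈ I1, v i with hA
  set n : ℝ := (I1.card : ℝ) with hn
  have hnpos : 0 < n := by
    rw [hn]; exact_mod_cast Finset.card_pos.mpr h1
  -- pick the best subset
  have hpow : (I2.powerset).Nonempty := ⟨∅, Finset.empty_mem_powerset I2⟩
  obtain ⟨S, hSmem, hSmax⟩ := Finset.exists_max_image I2.powerset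
    (fun S => (A + ∑ i ∈ S, v i) / (n + S.card)) hpow
  have hSsub : S ⊆ I2 := Finset.mem_powerset.mp hSmem
  have hsum1 : ∑ i ∈ I2, v i * (if i ∈ S then (1:ℝ) else 0) = ∑ i ∈ S, v i := by
    rw [Finset.sum_congr rfl (fun i _ => by rw [mul_ite, mul_one, mul_zero])]
    rw [Finset.sum_ite_mem, Finset.inter_eq_right.mpr hSsub]
  have hsum2 : ∑ i ∈ I2, (if i ∈ S then (1:ℝ) else 0) = S.card := by
    rw [Finset.sum_ite_mem, Finset.inter_eq_right.mpr hSsub, Finset.sum_const,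
      nsmul_eq_mul, mul_one]
  have hmax : ∀ alpha' : ι → ℝ, (∀ i ∈ I2, 0 ≤ alpha' i ∧ alpha' i ≤ 1) →
      (A + ∑ i ∈ I2, v i * alpha' i) / (n + ∑ i ∈ I2, alpha' i) ≤
        (A + ∑ i ∈ S, v i) / (n + S.card) := by
    intro alpha' hbound
    obtain ⟨T, hT, hle⟩ := key v I2 A n hnpos alpha' hbound
    exact hle.trans (hSmax T (Finset.mem_powerset.mpr hT))
  refine ⟨fun i => if i ∈ S then 1 else 0, ?_, ?_, ?_, ?_⟩
  · intro i _; by_cases h : i ∈ S <;> simp [h]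
  · intro alpha' hbound
    rw [hsum1, hsum2]
    exact hmax alpha' hbound
  · rw [hsum1, hsum2]
    have := hmax (fun _ => 0) (fun i _ => ⟨le_refl 0, zero_le_one⟩)
    simpa [inv_mul_eq_div] using this
  · intro i hi
    rw [hsum1, hsum2]
    have := hmax (fun j => if j = i then 1 else 0) (fun j _ => by
      by_cases h : j = i <;> simp [h])
    have heq : ∑ j ∈ I2, v j * (if j = i then (1:ℝ) else 0) = v i := by
      rw [Finset.sum_eq_single i (fun b _ hb => by simp [hb]) (fun h => absurd hi h)]
      simp
    have heq2 : ∑ j ∈ I2, (if j = i then (1:ℝ) else 0) = 1 := by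
      rw [Finset.sum_eq_single i (fun b _ hb => by simp [hb]) (fun h => absurd hi h)]
      simp
    rwa [heq, heq2] at this
end
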